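/- Let A be an n × n positive semidefinite complex matrix partitioned as a 2 × 2 block matrix A = [[A₁₁, A₁₂],[A₂₁, A₂₂]] with A₁₁ and A₂₂ square diagonal blocks. Then ∏_{i=1}^{n} a_{ii} ≥ det A₁₁ · det A₂₂ ≥ det A, where a_{ii} are the diagonal entries of A, all quantities are nonnegative reals, and the inequalities are of real numbers. -/

import Mathlib

open Matrix ComplexOrder

namespace FischerAux

variable {m n : Type*} [Fintype m] [Fintype n] [DecidableEq m] [DecidableEq n]

/-- The determinant of a PSD complex matrix is the (real) product of its eigenvalues. -/
lemma det_eq_ofReal {A : Matrix m m ℂ} (hA : A.PosSemidef) :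
    A.det = ((∏ i, hA.1.eigenvalues i : ℝ) : ℂ) := by
  rw [hA.1.det_eq_prod_eigenvalues]
  push_cast
  rfl

lemma det_re_nonneg {A : Matrix m m ℂ} (hA : A.PosSemidef) : 0 ≤ A.det.re := by
  rw [det_eq_ofReal hA, Complex.ofReal_re]
  exact Finset.prod_nonneg fun i _ => hA.eigenvalues_nonneg i

lemma one_le_det_re_one_add {M : Matrix m m ℂ} (hM : M.PosSemidef) :
    1 ≤ (1 + M).det.re := by
  have h1M : (1 + M).PosSemidef := Matrix.PosSemidef.one.add hM
  rw [det_eq_ofReal h1M, Complex.ofReal_re]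
  have hstep : ∀ i, 1 ≤ h1M.1.eigenvalues i := by
    intro i
    set v : m → ℂ := ⇑(h1M.1.eigenvectorBasis i) with hv
    have hvv : dotProduct (star v) v = 1 := by
      have := h1M.1.eigenvectorBasis.orthonormal.1 i
      rw [dotProduct_comm, ← EuclideanSpace.inner_eq_star_dotProduct]
      simpa [inner_self_eq_norm_sq_to_K, this] using
        congrArg (fun r : ℝ => ((r : ℂ) ^ 2)) this
    have heq := h1M.1.eigenvalues_eq i
    rw [heq]
    have : dotProduct (star v) ((1 + M) *ᵥ v) =
        dotProduct (star v) v + dotProduct (star v) (M *ᵥ v) := by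
      rw [Matrix.add_mulVec, dotProduct_add, Matrix.one_mulVec]
    rw [this, hvv]
    have hre := hM.re_dotProduct_nonneg v
    simp only [RCLike.re_to_complex] at hre
    simpa using by linarith
  have := Finset.prod_le_prod (s := (Finset.univ : Finset m))
    (f := fun _ : m => (1:ℝ)) (g := fun i => h1M.1.eigenvalues i)
    (fun i _ => zero_le_one) (fun i _ => hstep i)
  simpa using this

open scoped MatrixOrder in
/-- Determinant monotonicity: adding a PSD matrix increases the determinant. -/
lemma det_re_le_det_re_add {S P : Matrix m m ℂ} (hS : S.PosSemidef) (hP : P.PosSemidef) :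
    S.det.re ≤ (S + P).det.re := by
  by_cases hdet : S.det = 0
  · rw [hdet]
    simpa using det_re_nonneg (hS.add hP)
  · -- S is invertible; use its PSD square root
    set R := CFC.sqrt S with hR
    have hRpsd : R.PosSemidef := (CFC.sqrt_nonneg S).posSemidef
    have hRR : R * R = S := CFC.sqrt_mul_sqrt_self S hS.nonneg
    have hdR : R.det ≠ 0 := by
      intro h0
      apply hdet
      rw [← hRR, Matrix.det_mul, h0, zero_mul]
    haveI : Invertible R := R.invertibleOfIsUnitDet (isUnit_iff_ne_zero.mpr hdR)
    set M := R⁻¹ * P * R⁻¹ with hM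
    have hRinvH : R⁻¹ᴴ = R⁻¹ := by
      rw [Matrix.conjTranspose_nonsing_inv, hRpsd.1.eq]
    have hMpsd : M.PosSemidef := by
      have := hP.conjTranspose_mul_mul_same (B := R⁻¹)
      rwa [hRinvH] at this
    have key : R * (1 + M) * R = S + P := by
      rw [Matrix.mul_add, Matrix.mul_one, Matrix.add_mul, hRR, hM]
      congr 1
      rw [← Matrix.mul_assoc, ← Matrix.mul_assoc,
        Matrix.mul_nonsing_inv _ (isUnit_iff_ne_zero.mpr hdR), Matrix.one_mul,
        Matrix.mul_assoc, Matrix.nonsing_inv_mul _ (isUnit_iff_ne_zero.mpr hdR),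
        Matrix.mul_one]
    have hdetEq : (S + P).det = S.det * (1 + M).det := by
      rw [← key, Matrix.det_mul, Matrix.det_mul, ← hRR, Matrix.det_mul]
      ring
    have h1M : (1 + M).PosSemidef := Matrix.PosSemidef.one.add hMpsd
    rw [hdetEq, det_eq_ofReal hS, det_eq_ofReal h1M, ← Complex.ofReal_mul,
      Complex.ofReal_re, Complex.ofReal_re]
    have h1 := one_le_det_re_one_add hMpsd
    rw [det_eq_ofReal h1M, Complex.ofReal_re] at h1
    have h2 : 0 ≤ (∏ i, hS.1.eigenvalues i : ℝ) :=
      Finset.prod_nonneg fun i _ => hS.eigenvalues_nonneg i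
    nlinarith

lemma posDef_of_det_ne_zero {A : Matrix m m ℂ} (hA : A.PosSemidef) (h : A.det ≠ 0) :
    A.PosDef := by
  refine PosDef.of_dotProduct_mulVec_pos hA.1 fun x hx => ?_
  rcases lt_or_eq_of_le ((posSemidef_iff_dotProduct_mulVec.mp hA).2 x) with h' | h'
  · exact h'
  · exfalso
    apply hx
    have h0 : A *ᵥ x = 0 := (hA.dotProduct_mulVec_zero_iff x).mp h'.symm
    by_contra hxne
    exact h (Matrix.exists_mulVec_eq_zero_iff.mp ⟨x, hxne, h0⟩)

/-- Fischer's inequality for a Hermitian block decomposition. -/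
lemma fischer_aux {A : Matrix m m ℂ} {B : Matrix m n ℂ} {D : Matrix n n ℂ}
    (h : (Matrix.fromBlocks A B Bᴴ D).PosSemidef) :
    (Matrix.fromBlocks A B Bᴴ D).det.re ≤ A.det.re * D.det.re := by
  have hApsd : A.PosSemidef := by
    have := h.submatrix Sum.inl
    exact this
  have hDpsd : D.PosSemidef := by
    have := h.submatrix Sum.inr
    exact this
  by_cases hdA : A.det = 0
  · -- the whole matrix is singular
    obtain ⟨x, hxne, hx0⟩ := Matrix.exists_mulVec_eq_zero_iff.mpr hdA
    have hv : dotProduct (star (Sum.elim x 0))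
        ((Matrix.fromBlocks A B Bᴴ D) *ᵥ (Sum.elim x 0)) = 0 := by
      rw [Matrix.fromBlocks_mulVec]
      simp [Function.star_sumElim, sumElim_dotProduct_sumElim, hx0]
    have h0 : (Matrix.fromBlocks A B Bᴴ D) *ᵥ (Sum.elim x 0) = 0 :=
      (h.dotProduct_mulVec_zero_iff _).mp hv
    have hdet0 : (Matrix.fromBlocks A B Bᴴ D).det = 0 := by
      apply Matrix.exists_mulVec_eq_zero_iff.mp
      refine ⟨Sum.elim x 0, fun hc => hxne ?_, h0⟩
      ext i
      exact congrFun hc (Sum.inl i)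
    rw [hdet0, hdA]
    simp [mul_comm, mul_nonneg (det_re_nonneg hDpsd)]
  · have hApd : A.PosDef := posDef_of_det_ne_zero hApsd hdA
    haveI : Invertible A := A.invertibleOfIsUnitDet (isUnit_iff_ne_zero.mpr hdA)
    have hS : (D - Bᴴ * A⁻¹ * B).PosSemidef := (Matrix.PosDef.fromBlocks₁₁ B D hApd).mp h
    have hP : (Bᴴ * A⁻¹ * B).PosSemidef :=
      (hApd.posSemidef.inv).conjTranspose_mul_mul_same (B := B)
    have hdetEq : (Matrix.fromBlocks A B Bᴴ D).det = A.det * (D - Bᴴ * A⁻¹ * B).det := by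
      rw [Matrix.det_fromBlocks₁₁, Matrix.invOf_eq_nonsing_inv]
    have hSD : (D - Bᴴ * A⁻¹ * B).det.re ≤ D.det.re := by
      have := det_re_le_det_re_add hS hP
      rwa [sub_add_cancel] at this
    rw [hdetEq, det_eq_ofReal hApsd, det_eq_ofReal hS, ← Complex.ofReal_mul,
      Complex.ofReal_re, Complex.ofReal_re]
    rw [det_eq_ofReal hS, Complex.ofReal_re] at hSD
    have h2 : 0 ≤ (∏ i, hApsd.1.eigenvalues i : ℝ) :=
      Finset.prod_nonneg fun i _ => hApsd.eigenvalues_nonneg i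
    exact mul_le_mul_of_nonneg_left hSD h2

/-- Hadamard's inequality for PSD matrices. -/
lemma hadamard : ∀ (k : ℕ) (B : Matrix (Fin k) (Fin k) ℂ), B.PosSemidef →
    B.det.re ≤ ∏ i, (B i i).re := by
  intro k
  induction k with
  | zero => intro B _; simp [Matrix.det_fin_zero]
  | succ k ih =>
    intro B hB
    set e : (Fin 1 ⊕ Fin k) ≃ Fin (k + 1) :=
      finSumFinEquiv.trans (finCongr (Nat.add_comm 1 k)) with he
    set C : Matrix (Fin 1 ⊕ Fin k) (Fin 1 ⊕ Fin k) ℂ := B.submatrix e e with hCdef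
    have hC : C.PosSemidef := hB.submatrix e
    have h21 : C.toBlocks₂₁ = (C.toBlocks₁₂)ᴴ := by
      ext i j
      have := congrFun (congrFun hC.1 (Sum.inl j)) (Sum.inr i)
      simp only [Matrix.conjTranspose_apply] at this ⊢
      simp [Matrix.toBlocks₂₁, Matrix.toBlocks₁₂, ← this]
    have hCblocks : C = Matrix.fromBlocks C.toBlocks₁₁ C.toBlocks₁₂ (C.toBlocks₁₂)ᴴ
        C.toBlocks₂₂ := by
      rw [← h21, Matrix.fromBlocks_toBlocks]
    have hfa : C.det.re ≤ (C.toBlocks₁₁).det.re * (C.toBlocks₂₂).det.re := by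
      have := fischer_aux (hCblocks ▸ hC)
      rwa [← hCblocks] at this
    have hdetC : C.det = B.det := Matrix.det_submatrix_equiv_self e B
    have h11psd : (C.toBlocks₁₁).PosSemidef := by
      have := hC.submatrix Sum.inl
      exact this
    have h22psd : (C.toBlocks₂₂).PosSemidef := by
      have := hC.submatrix Sum.inr
      exact this
    have he0 : e (Sum.inl 0) = 0 := rfl
    have hesucc : ∀ j : Fin k, e (Sum.inr j) = j.succ := by
      intro j
      apply Fin.ext
      simp [he, finSumFinEquiv, Nat.add_comm]
    have hdet11 : (C.toBlocks₁₁).det = B 0 0 := by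
      rw [Matrix.det_fin_one]
      simp [Matrix.toBlocks₁₁, hCdef, he0]
    have hdiag22 : ∀ j : Fin k, C.toBlocks₂₂ j j = B j.succ j.succ := by
      intro j
      simp [Matrix.toBlocks₂₂, hCdef, hesucc]
    have hih := ih _ h22psd
    have h00 : 0 ≤ (B 0 0).re := by
      have := det_re_nonneg h11psd
      rwa [hdet11] at this
    calc B.det.re = C.det.re := by rw [hdetC]
      _ ≤ (C.toBlocks₁₁).det.re * (C.toBlocks₂₂).det.re := hfa
      _ ≤ (B 0 0).re * ∏ j, (C.toBlocks₂₂ j j).re := by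
          rw [hdet11]
          exact mul_le_mul_of_nonneg_left hih h00
      _ = ∏ i, (B i i).re := by
          rw [Fin.prod_univ_succ]
          congr 1
          exact Finset.prod_congr rfl fun j _ => by rw [hdiag22]

end FischerAux

open FischerAux in
/-- **Fischer's inequality (Lemma 2.4).** If the block matrix
`A = [[A₁₁, A₁₂], [A₂₁, A₂₂]]` is positive semidefinite with square diagonal
blocks, then `∏ᵢ aᵢᵢ ≥ det A₁₁ · det A₂₂ ≥ det A`. -/
theorem fischer_inequality {n₁ n₂ : ℕ}
    (A₁₁ : Matrix (Fin n₁) (Fin n₁) ℂ) (A₁₂ : Matrix (Fin n₁) (Fin n₂) ℂ)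
    (A₂₁ : Matrix (Fin n₂) (Fin n₁) ℂ) (A₂₂ : Matrix (Fin n₂) (Fin n₂) ℂ)
    (hA : (Matrix.fromBlocks A₁₁ A₁₂ A₂₁ A₂₂).PosSemidef) :
    (∏ i, ((Matrix.fromBlocks A₁₁ A₁₂ A₂₁ A₂₂) i i).re ≥
        A₁₁.det.re * A₂₂.det.re) ∧
      A₁₁.det.re * A₂₂.det.re ≥ (Matrix.fromBlocks A₁₁ A₁₂ A₂₁ A₂₂).det.re := by
  have h21 : A₂₁ = A₁₂ᴴ := (Matrix.isHermitian_fromBlocks_iff.mp hA.1).2.1.symm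
  subst h21
  have h11 : A₁₁.PosSemidef := by
    have := hA.submatrix Sum.inl
    exact this
  have h22 : A₂₂.PosSemidef := by
    have := hA.submatrix Sum.inr
    exact this
  constructor
  · -- Hadamard part
    have hprod : ∏ i, ((Matrix.fromBlocks A₁₁ A₁₂ A₁₂ᴴ A₂₂) i i).re =
        (∏ i, (A₁₁ i i).re) * ∏ j, (A₂₂ j j).re := by
      rw [Fintype.prod_sum_type]
      rfl
    rw [ge_iff_le, hprod]
    have h1 := hadamard n₁ A₁₁ h11
    have h2 := hadamard n₂ A₂₂ h22
    exact mul_le_mul h1 h2 (det_re_nonneg h22) (le_trans (det_re_nonneg h11) h1)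
  · exact fischer_aux hA
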